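/- Given two systems S1 and S2 with disjoint place and transition sets, the set of reachable markings of their synchronous product is exactly the set of sums of a reachable marking of S1 and a reachable marking of S2: reach(S1⊗S2) = { M1 + M2 : M1 ∈ reach(S1), M2 ∈ reach(S2) }. -/
import Mathlib


/-- A Petri net over places `P`, transitions `T`, and alphabet `A`.
`pre p t` means there is an arc from place `p` to transition `t`;
`post t p` means there is an arc from transition `t` to place `p`;
`label t = none` means that `t` is silent (labeled `τ`). -/
structure PetriNet (P T A : Type) where
  pre : P → T → Prop
  post : T → P → Prop
  label : T → Option A

namespace PetriNet

variable {P T A : Type}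

/-- A transition is enabled if all of its input places are marked. -/
def Enabled (N : PetriNet P T A) (M : P → ℕ) (t : T) : Prop :=
  ∀ p, N.pre p t → 0 < M p

/-- The marking obtained from `M` by firing the transition `t`. -/
noncomputable def fire (N : PetriNet P T A) (M : P → ℕ) (t : T) : P → ℕ :=
  fun p =>
    letI := Classical.propDecidable
    if N.pre p t ∧ ¬N.post t p then M p - 1
    else if ¬N.pre p t ∧ N.post t p then M p + 1
    else M p

/-- `Fires N M σ M'`: the firing sequence `σ` is enabled at `M` and leads to `M'`,
written `(N,M)[σ⟩(N,M')`. -/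
inductive Fires (N : PetriNet P T A) : (P → ℕ) → List T → (P → ℕ) → Prop
  | nil (M : P → ℕ) : Fires N M [] M
  | cons {M M' : P → ℕ} {t : T} {σ : List T} :
      N.Enabled M t → Fires N (N.fire M t) σ M' → Fires N M (t :: σ) M'

/-- The set of markings reachable from `M0`. -/
def reach (N : PetriNet P T A) (M0 : P → ℕ) : Set (P → ℕ) :=
  {M | ∃ σ : List T, Fires N M0 σ M}

/-- A system is `b`-bounded if every reachable marking has at most `b` tokens on each place. -/
def Bounded (N : PetriNet P T A) (M0 : P → ℕ) (b : ℕ) : Prop :=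
  ∀ M ∈ reach N M0, ∀ p, M p ≤ b

/-- A system is live if from every reachable marking every transition can be enabled again. -/
def Live (N : PetriNet P T A) (M0 : P → ℕ) : Prop :=
  ∀ M ∈ reach N M0, ∀ t : T, ∃ M' ∈ reach N M, N.Enabled M' t

/-- Free choice: any two transitions have equal or disjoint sets of input places. -/
def FreeChoice (N : PetriNet P T A) : Prop :=
  ∀ t t' : T, (∀ p, N.pre p t ↔ N.pre p t') ∨ ∀ p, ¬(N.pre p t ∧ N.pre p t')

/-- A firing sequence is biased if any two distinct transitions occurring in it
have disjoint sets of input places. -/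
def Biased (N : PetriNet P T A) (σ : List T) : Prop :=
  ∀ t ∈ σ, ∀ t' ∈ σ, t ≠ t' → ∀ p, ¬(N.pre p t ∧ N.pre p t')

/-- Undirected adjacency of the underlying bipartite graph. -/
def Adj (N : PetriNet P T A) : P ⊕ T → P ⊕ T → Prop
  | Sum.inl p, Sum.inr t => N.pre p t ∨ N.post t p
  | Sum.inr t, Sum.inl p => N.pre p t ∨ N.post t p
  | _, _ => False

/-- The underlying graph of the net is weakly connected. -/
def WeaklyConnected (N : PetriNet P T A) : Prop :=
  ∀ x y : P ⊕ T, Relation.ReflTransGen N.Adj x y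

end PetriNet

open PetriNet

/-- An accepting system: a Petri net with an initial and a final marking. -/
structure AcceptingSystem (P T A : Type) where
  net : PetriNet P T A
  init : P → ℕ
  final : P → ℕ

/-- A complete firing sequence leads from the initial to the final marking. -/
def CompleteFiring {P T A : Type} (S : AcceptingSystem P T A) (σ : List T) : Prop :=
  Fires S.net S.init σ S.final

/-- A move: `none` in a component stands for the no-move symbol `≫`. -/
abbrev Move (A T : Type) := Option A × Option T

/-- Legal moves: synchronous moves, log moves, and model moves. -/
def LegalMove {P T A : Type} (N : PetriNet P T A) : Move A T → Prop
  | (some a, some t) => N.label t = some a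
  | (some _, none) => True
  | (none, some _) => True
  | (none, none) => False

/-- `γ` is an alignment between the trace `σ` and the accepting system `S`. -/
def IsAlignment {P T A : Type} (S : AcceptingSystem P T A) (σ : List A)
    (γ : List (Move A T)) : Prop :=
  (∀ m ∈ γ, LegalMove S.net m) ∧
  γ.filterMap Prod.fst = σ ∧
  CompleteFiring S (γ.filterMap Prod.snd)

/-- The cost of an alignment with respect to a cost function. -/
def alignCost {A T : Type} (c : Move A T → NNReal) (γ : List (Move A T)) : NNReal :=
  (γ.map c).sum
/-- Transitions of the synchronous product: synchronous pairs `(t1,t2)` with equal labels,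
and the moves `(t1,≫)` and `(≫,t2)`, where `none` plays the role of `≫`. -/
def SyncTrans {P1 T1 P2 T2 A : Type} (N1 : PetriNet P1 T1 A) (N2 : PetriNet P2 T2 A) : Type :=
  {x : Option T1 × Option T2 //
    (∃ t1 t2, x = (some t1, some t2) ∧ N1.label t1 = N2.label t2) ∨
    (∃ t1, x = (some t1, none)) ∨ (∃ t2, x = (none, some t2))}

/-- The Petri net underlying the synchronous product of two nets. A product transition
inherits the arcs of its (non-`≫`) components. -/
def syncProdNet {P1 T1 P2 T2 A : Type} (N1 : PetriNet P1 T1 A) (N2 : PetriNet P2 T2 A) :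
    PetriNet (P1 ⊕ P2) (SyncTrans N1 N2) A where
  pre p t :=
    match p with
    | Sum.inl p1 => ∃ t1, t.val.1 = some t1 ∧ N1.pre p1 t1
    | Sum.inr p2 => ∃ t2, t.val.2 = some t2 ∧ N2.pre p2 t2
  post t p :=
    match p with
    | Sum.inl p1 => ∃ t1, t.val.1 = some t1 ∧ N1.post t1 p1
    | Sum.inr p2 => ∃ t2, t.val.2 = some t2 ∧ N2.post t2 p2
  label t := t.val.1.bind N1.label

/-- The synchronous product of two accepting systems: places are the disjoint union of the
places, the initial (final) marking is the sum of the initial (final) markings. -/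
def syncProd {P1 T1 P2 T2 A : Type}
    (S1 : AcceptingSystem P1 T1 A) (S2 : AcceptingSystem P2 T2 A) :
    AcceptingSystem (P1 ⊕ P2) (SyncTrans S1.net S2.net) A where
  net := syncProdNet S1.net S2.net
  init := Sum.elim S1.init S2.init
  final := Sum.elim S1.final S2.final
section Aux

variable {P1 T1 P2 T2 A : Type} {N1 : PetriNet P1 T1 A} {N2 : PetriNet P2 T2 A}

theorem fires_append {P T A : Type} {N : PetriNet P T A} {M M' M'' : P → ℕ}
    {σ σ' : List T} (h : Fires N M σ M') (h' : Fires N M' σ' M'') :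
    Fires N M (σ ++ σ') M'' := by
  induction h with
  | nil => exact h'
  | cons he _ ih => exact Fires.cons he (ih h')

/-- Auxiliary: optionally fire. -/
noncomputable def ofire {P T A : Type} (N : PetriNet P T A) (M : P → ℕ) :
    Option T → (P → ℕ)
  | some t => N.fire M t
  | none => M

theorem fire_sum (M1 : P1 → ℕ) (M2 : P2 → ℕ) (t : SyncTrans N1 N2) :
    (syncProdNet N1 N2).fire (Sum.elim M1 M2) t =
      Sum.elim (ofire N1 M1 t.val.1) (ofire N2 M2 t.val.2) := by
  funext p
  cases p with
  | inl p1 =>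
    cases ht : t.val.1 with
    | none => simp [fire, syncProdNet, ofire, ht]
    | some t1 =>
      by_cases h1 : N1.pre p1 t1 <;> by_cases h2 : N1.post t1 p1 <;>
        simp [fire, syncProdNet, ofire, ht, h1, h2]
  | inr p2 =>
    cases ht : t.val.2 with
    | none => simp [fire, syncProdNet, ofire, ht]
    | some t2 =>
      by_cases h1 : N2.pre p2 t2 <;> by_cases h2 : N2.post t2 p2 <;>
        simp [fire, syncProdNet, ofire, ht, h1, h2]

theorem enabled_sum {M1 : P1 → ℕ} {M2 : P2 → ℕ} {t : SyncTrans N1 N2} :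
    (syncProdNet N1 N2).Enabled (Sum.elim M1 M2) t ↔
      ((∀ t1, t.val.1 = some t1 → N1.Enabled M1 t1) ∧
       (∀ t2, t.val.2 = some t2 → N2.Enabled M2 t2)) := by
  constructor
  · intro h
    refine ⟨fun t1 ht p1 hp => ?_, fun t2 ht p2 hp => ?_⟩
    · exact h (Sum.inl p1) ⟨t1, ht, hp⟩
    · exact h (Sum.inr p2) ⟨t2, ht, hp⟩
  · rintro ⟨h1, h2⟩ p hp
    cases p with
    | inl p1 => obtain ⟨t1, ht, hp⟩ := hp; exact h1 t1 ht p1 hp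
    | inr p2 => obtain ⟨t2, ht, hp⟩ := hp; exact h2 t2 ht p2 hp

def liftL (N1 : PetriNet P1 T1 A) (N2 : PetriNet P2 T2 A) (t1 : T1) :
    SyncTrans N1 N2 := ⟨(some t1, none), Or.inr (Or.inl ⟨t1, rfl⟩)⟩

def liftR (N1 : PetriNet P1 T1 A) (N2 : PetriNet P2 T2 A) (t2 : T2) :
    SyncTrans N1 N2 := ⟨(none, some t2), Or.inr (Or.inr ⟨t2, rfl⟩)⟩

theorem fires_liftL {M1 M1' : P1 → ℕ} (M2 : P2 → ℕ) {σ : List T1}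
    (h : Fires N1 M1 σ M1') :
    Fires (syncProdNet N1 N2) (Sum.elim M1 M2) (σ.map (liftL N1 N2))
      (Sum.elim M1' M2) := by
  induction h with
  | nil => exact Fires.nil _
  | @cons M M' t σ he _ ih =>
    refine Fires.cons (enabled_sum.2 ⟨?_, ?_⟩) ?_
    · rintro t1 ht; cases ht; exact he
    · rintro t2 ⟨⟩
    · rw [fire_sum]; exact ih

theorem fires_liftR (M1 : P1 → ℕ) {M2 M2' : P2 → ℕ} {σ : List T2}
    (h : Fires N2 M2 σ M2') :
    Fires (syncProdNet N1 N2) (Sum.elim M1 M2) (σ.map (liftR N1 N2))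
      (Sum.elim M1 M2') := by
  induction h with
  | nil => exact Fires.nil _
  | @cons M M' t σ he _ ih =>
    refine Fires.cons (enabled_sum.2 ⟨?_, ?_⟩) ?_
    · rintro t1 ⟨⟩
    · rintro t2 ht; cases ht; exact he
    · rw [fire_sum]; exact ih

theorem ofires {M : P1 → ℕ} (o : Option T1)
    (he : ∀ t, o = some t → N1.Enabled M t) :
    ∃ σ, Fires N1 M σ (ofire N1 M o) := by
  cases o with
  | none => exact ⟨[], Fires.nil _⟩
  | some t => exact ⟨[t], Fires.cons (he t rfl) (Fires.nil _)⟩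

theorem fires_sum_decompose {M1 : P1 → ℕ} {M2 : P2 → ℕ} {M : P1 ⊕ P2 → ℕ}
    {σ : List (SyncTrans N1 N2)}
    (h : Fires (syncProdNet N1 N2) (Sum.elim M1 M2) σ M) :
    ∃ M1' M2', M = Sum.elim M1' M2' ∧ M1' ∈ reach N1 M1 ∧ M2' ∈ reach N2 M2 := by
  induction σ generalizing M1 M2 with
  | nil => cases h; exact ⟨M1, M2, rfl, ⟨[], Fires.nil _⟩, ⟨[], Fires.nil _⟩⟩
  | cons t σ ih =>
    cases h with
    | cons he hf =>
      rw [fire_sum] at hf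
      obtain ⟨h1, h2⟩ := enabled_sum.1 he
      obtain ⟨M1', M2', hM, ⟨σ1, hσ1⟩, ⟨σ2, hσ2⟩⟩ := ih hf
      obtain ⟨σ1', hσ1'⟩ := ofires t.val.1 h1
      obtain ⟨σ2', hσ2'⟩ := ofires t.val.2 h2
      exact ⟨M1', M2', hM, ⟨σ1' ++ σ1, fires_append hσ1' hσ1⟩,
        ⟨σ2' ++ σ2, fires_append hσ2' hσ2⟩⟩

end Aux

/-- The set of reachable markings of a synchronous product is exactly the set of sums of a
reachable marking of `S1` and a reachable marking of `S2` (a marking on `P1 ∪ P2` is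
identified with the pair of its restrictions, i.e. with `Sum.elim M1 M2`). -/
theorem reach_syncProd {P1 T1 P2 T2 A : Type}
    [Fintype P1] [Fintype T1] [Fintype P2] [Fintype T2]
    (S1 : AcceptingSystem P1 T1 A) (S2 : AcceptingSystem P2 T2 A)
    (hconn1 : S1.net.WeaklyConnected) (hconn2 : S2.net.WeaklyConnected) :
    reach (syncProd S1 S2).net (syncProd S1 S2).init =
      {M : P1 ⊕ P2 → ℕ | ∃ M1 ∈ reach S1.net S1.init, ∃ M2 ∈ reach S2.net S2.init,
        M = Sum.elim M1 M2} := by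
  ext M
  constructor
  · rintro ⟨σ, hσ⟩
    obtain ⟨M1, M2, hM, h1, h2⟩ := fires_sum_decompose hσ
    exact ⟨M1, h1, M2, h2, hM⟩
  · rintro ⟨M1, ⟨σ1, h1⟩, M2, ⟨σ2, h2⟩, rfl⟩
    exact ⟨σ1.map (liftL S1.net S2.net) ++ σ2.map (liftR S1.net S2.net),
      fires_append (fires_liftL S2.init h1) (fires_liftR M1 h2)⟩
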